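/- Let n ≥ 1, set N = n, and let a_1, …, a_n be nonzero real numbers. Then the diagonal matrix J = Σ_{k=1}^{n} a_k e_{kk} satisfies the reflection equation R J₁ R^{t₁} J₂ = J₂ R^{t₁} J₁ R with respect to the type-A R-matrix of size N. (This is the case AI, corresponding to the symmetric space SU(n)/SO(n), of Theorem 1(1).) -/

import Mathlib

open Matrix

noncomputable section

/-- Kronecker product of two `N × N` matrices, with `(eᵢⱼ ⊗ eₖₗ)` having
`((i,k),(j,l))`-entry `1`. -/
def kron {N : ℕ} (A B : Matrix (Fin N) (Fin N) ℂ) :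
    Matrix (Fin N × Fin N) (Fin N × Fin N) ℂ :=
  fun p r => A p.1 r.1 * B p.2 r.2

/-- Partial transpose in the first tensor factor. -/
def ptransp {N : ℕ} (R : Matrix (Fin N × Fin N) (Fin N × Fin N) ℂ) :
    Matrix (Fin N × Fin N) (Fin N × Fin N) ℂ :=
  fun p r => R (r.1, p.2) (p.1, r.2)

/-- The reflection equation `R J₁ R^{t₁} J₂ = J₂ R^{t₁} J₁ R`. -/
def ReflectionEq {N : ℕ} (R : Matrix (Fin N × Fin N) (Fin N × Fin N) ℂ)
    (J : Matrix (Fin N) (Fin N) ℂ) : Prop :=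
  R * kron J 1 * ptransp R * kron 1 J = kron 1 J * ptransp R * kron J 1 * R

/-- Matrix units. -/
def e {N : ℕ} (i j : Fin N) : Matrix (Fin N) (Fin N) ℂ :=
  Matrix.single i j 1

/-- The type-A R-matrix of size `N`:
`R = q^{-1/N} ( Σ_{i,j} q^{δ_{ij}} e_{ii} ⊗ e_{jj} + (q − q⁻¹) Σ_{j<i} e_{ij} ⊗ e_{ji} )`. -/
def RmatA (q : ℝ) (N : ℕ) : Matrix (Fin N × Fin N) (Fin N × Fin N) ℂ :=
  ((q ^ (-1 / (N : ℝ)) : ℝ) : ℂ) •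
    ((∑ i : Fin N, ∑ j : Fin N,
        ((q ^ (if i = j then (1 : ℝ) else 0) : ℝ) : ℂ) • kron (e i i) (e j j))
      + ((q : ℂ) - (q : ℂ)⁻¹) •
        ∑ i : Fin N, ∑ j : Fin N,
          if (j : ℕ) < (i : ℕ) then kron (e i j) (e j i) else 0)


set_option maxHeartbeats 1600000 in
lemma RA_apply (q : ℝ) {N : ℕ} (p r : Fin N × Fin N) :
    RmatA q N p r = ((q ^ (-1 / (N : ℝ)) : ℝ) : ℂ) *
      ((if r = p then (if p.1 = p.2 then (q : ℂ) else 1) else 0)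
        + ((q : ℂ) - (q : ℂ)⁻¹) *
          (if r = (p.2, p.1) then (if (p.2 : ℕ) < (p.1 : ℕ) then 1 else 0) else 0)) := by
  obtain ⟨i, k⟩ := p
  obtain ⟨j, l⟩ := r
  have key1 : ∀ x x1 : Fin N,
      ((q ^ (if x = x1 then (1:ℝ) else 0) : ℝ) : ℂ) *
        ((if x = i ∧ x = j then 1 else 0) * (if x1 = k ∧ x1 = l then 1 else 0))
      = (if x = i ∧ x = j then (1:ℂ) else 0) *
          ((if x1 = k ∧ x1 = l then 1 else 0) * ((q ^ (if x = x1 then (1:ℝ) else 0) : ℝ) : ℂ)) := by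
    intro x x1; ring
  have key2 : ∀ x x1 : Fin N,
      (if (x1:ℕ) < (x:ℕ) then
        ((if x = i ∧ x1 = j then (1:ℂ) else 0) * (if x1 = k ∧ x = l then 1 else 0)) else 0)
      = (if x = i ∧ x = l then (1:ℂ) else 0) *
          ((if x1 = k ∧ x1 = j then 1 else 0) * (if (x1:ℕ) < (x:ℕ) then 1 else 0)) := by
    intro x x1
    by_cases h1 : x = i <;> by_cases h2 : x = l <;> by_cases h3 : x1 = j <;>
      by_cases h4 : x1 = k <;> simp_all
  simp only [RmatA, Matrix.smul_apply, Matrix.add_apply, Matrix.sum_apply, kron, e,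
    Matrix.single, Matrix.of_apply, smul_eq_mul, Matrix.zero_apply,
    apply_ite (fun M : Matrix (Fin N × Fin N) (Fin N × Fin N) ℂ => M (i,k) (j,l))]
  simp only [key1, key2]
  simp only [ite_and, ite_mul, zero_mul, one_mul,
    Finset.sum_ite_irrel, Finset.sum_const_zero,
    Finset.sum_ite_eq, Finset.sum_ite_eq', Finset.mem_univ, if_true]
  clear key1 key2
  have hq : ((q ^ (if i = k then (1:ℝ) else 0) : ℝ) : ℂ) = if i = k then (q:ℂ) else 1 := by
    split_ifs <;> simp
  rw [hq]
  simp only [Prod.mk.injEq]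
  congr 1
  congr 1
  · split_ifs <;> aesop
  · congr 1
    split_ifs <;> aesop

section helpers
variable {N : ℕ} (a : Fin N → ℝ)

lemma J_apply (i j : Fin N) :
    (∑ k : Fin N, ((a k : ℂ)) • e k k) i j = if i = j then (a i : ℂ) else 0 := by
  simp [Matrix.sum_apply, e, Matrix.single, ite_and]

lemma mul_kronJ1 (M : Matrix (Fin N × Fin N) (Fin N × Fin N) ℂ) (p r : Fin N × Fin N) :
    (M * kron (∑ k : Fin N, ((a k : ℂ)) • e k k) 1) p r = M p r * (a r.1 : ℂ) := by
  rw [Matrix.mul_apply]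
  rw [Finset.sum_eq_single r]
  · simp only [kron, J_apply, Matrix.one_apply_eq, eq_self_iff_true, if_true, mul_one]
  · intro b _ hb
    simp only [kron, J_apply, Matrix.one_apply]
    by_cases h1 : b.1 = r.1 <;> by_cases h2 : b.2 = r.2 <;>
      simp [h1, h2] <;> exact absurd (Prod.ext h1 h2) hb
  · simp

lemma mul_kron1J (M : Matrix (Fin N × Fin N) (Fin N × Fin N) ℂ) (p r : Fin N × Fin N) :
    (M * kron 1 (∑ k : Fin N, ((a k : ℂ)) • e k k)) p r = M p r * (a r.2 : ℂ) := by
  rw [Matrix.mul_apply]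
  rw [Finset.sum_eq_single r]
  · simp only [kron, J_apply, Matrix.one_apply_eq, eq_self_iff_true, if_true, mul_one, one_mul]
  · intro b _ hb
    simp only [kron, J_apply, Matrix.one_apply]
    by_cases h1 : b.1 = r.1 <;> by_cases h2 : b.2 = r.2 <;>
      simp [h1, h2] <;> exact absurd (Prod.ext h1 h2) hb
  · simp

lemma kron1J_mul (M : Matrix (Fin N × Fin N) (Fin N × Fin N) ℂ) (p r : Fin N × Fin N) :
    (kron 1 (∑ k : Fin N, ((a k : ℂ)) • e k k) * M) p r = (a p.2 : ℂ) * M p r := by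
  rw [Matrix.mul_apply]
  rw [Finset.sum_eq_single p]
  · simp only [kron, J_apply, Matrix.one_apply_eq, eq_self_iff_true, if_true, mul_one, one_mul]
  · intro b _ hb
    simp only [kron, J_apply, Matrix.one_apply]
    by_cases h1 : p.1 = b.1 <;> by_cases h2 : p.2 = b.2 <;>
      simp [h1, h2] <;> exact absurd (Prod.ext h1.symm h2.symm) hb
  · simp

end helpers

set_option maxHeartbeats 4000000 in

/-- type AI: a diagonal matrix with nonzero real entries satisfies the
reflection equation for the type-A R-matrix. -/
theorem reflection_equation_AI (q : ℝ) (hq0 : 0 < q) (hq1 : q < 1)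
    (n : ℕ) (hn : 1 ≤ n) (a : Fin n → ℝ) (ha : ∀ k, a k ≠ 0) :
    ReflectionEq (RmatA q n) (∑ k : Fin n, ((a k : ℂ)) • e k k) := by
  classical
  unfold ReflectionEq
  ext p r
  obtain ⟨i, k⟩ := p
  obtain ⟨j, l⟩ := r
  rw [mul_kron1J a, Matrix.mul_apply]
  conv_rhs => rw [Matrix.mul_apply]
  simp only [mul_kronJ1 a, kron1J_mul a]
  simp only [ptransp, RA_apply, Prod.mk.injEq, Fintype.sum_prod_type,
    ite_and, mul_ite, ite_mul, mul_zero, zero_mul, mul_add, add_mul, mul_one, one_mul,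
    Finset.sum_add_distrib, Finset.sum_ite_irrel, Finset.sum_const_zero,
    Finset.sum_ite_eq, Finset.sum_ite_eq', Finset.mem_univ, if_true]
  have hkey : ∀ (P : Prop) (inst : Decidable P) (u v : ℂ),
      (if P then u + v else 0) = (if P then u else 0) + (if P then v else 0) := by
    intros P inst u v; split_ifs <;> simp
  have hswap : ∀ (P Q : Prop) (instP : Decidable P) (instQ : Decidable Q) (u : ℂ),
      (if P then (if Q then u else 0) else 0) = if Q then (if P then u else 0) else 0 := by
    intros P Q instP instQ u; split_ifs <;> rfl
  simp only [hkey, hswap, Finset.sum_add_distrib,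
    Finset.sum_ite_eq, Finset.sum_ite_eq', Finset.mem_univ, if_true]
  clear hkey hswap
  split_ifs <;> subst_vars <;> first | rfl | omega | ring
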